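/- The explicit (●,■) qudit Floquet code checks satisfy the three code conditions: let D be a prime number with D ≥ 3, and define the two-qudit check operators G := X^(−2) ⊗ₖ X^(−2), R := (X*Z) ⊗ₖ (X*Z^(−1)), and B := (X*Z^(−1)) ⊗ₖ (X*Z) (integer powers via invertibility of X and Z). Then: (i) G, R, B pairwise commute; (ii) the single-qudit Paulis X^(−2), X*Z, and X*Z^(−1) pairwise do NOT commute; and (iii) the ordered product of the single-qudit green, red, blue Paulis over an edge equals the identity, (X^(−2) * (X*Z) * (X*Z^(−1))) ⊗ₖ (X^(−2) * (X*Z^(−1)) * (X*Z)) = 1. -/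

import Mathlib

noncomputable def omg (D : ℕ) : ℂ := Complex.exp (2 * Real.pi * Complex.I / D)

noncomputable def Xmat (D : ℕ) : Matrix (Fin D) (Fin D) ℂ :=
  Matrix.of fun i j => if (i : ZMod D) = (j : ZMod D) + 1 then 1 else 0

noncomputable def Zmat (D : ℕ) : Matrix (Fin D) (Fin D) ℂ :=
  Matrix.of fun i j => if i = j then (omg D) ^ (i : ℕ) else 0

open Kronecker

noncomputable def Ymat (D : ℕ) : Matrix (Fin D) (Fin D) ℂ :=
  Matrix.of fun i j => if (j : ZMod D) = (i : ZMod D) + 1 then 1 else 0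

noncomputable def Wmat (D : ℕ) : Matrix (Fin D) (Fin D) ℂ :=
  Matrix.diagonal fun i => ((omg D) ^ (i : ℕ))⁻¹

section Aux
variable {D : ℕ} [NeZero D]
set_option linter.unusedSectionVars false

def fnn (a : ZMod D) : Fin D := ⟨a.val, ZMod.val_lt a⟩

lemma cast_fnn (a : ZMod D) : ((fnn a : ℕ) : ZMod D) = a := ZMod.natCast_rightInverse a

lemma cast_eq_iff (k : Fin D) (a : ZMod D) : ((k : ℕ) : ZMod D) = a ↔ k = fnn a := by
  constructor
  · intro h
    have := congrArg ZMod.val h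
    rw [ZMod.val_cast_of_lt k.isLt] at this
    exact Fin.ext this
  · rintro rfl; exact cast_fnn a

lemma omg_ne_zero : omg D ≠ 0 := Complex.exp_ne_zero _

lemma omg_pow_D : omg D ^ D = 1 := (Complex.isPrimitiveRoot_exp D (NeZero.ne D)).pow_eq_one

/-- shift lemma -/
lemma shift_pow {i j : Fin D} (h : ((i : ℕ) : ZMod D) = ((j : ℕ) : ZMod D) + 1) :
    omg D ^ (i : ℕ) = omg D * omg D ^ (j : ℕ) := by
  have hval := congrArg ZMod.val h
  rw [ZMod.val_cast_of_lt i.isLt] at hval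
  have hj1 : ((j : ℕ) : ZMod D) + 1 = (((j : ℕ) + 1 : ℕ) : ZMod D) := by push_cast; ring
  rw [hj1, ZMod.val_natCast] at hval
  rcases Nat.lt_or_ge ((j : ℕ) + 1) D with hlt | hge
  · rw [Nat.mod_eq_of_lt hlt] at hval
    rw [hval, pow_succ, mul_comm]
  · have hDle : (j : ℕ) + 1 = D := le_antisymm (Nat.succ_le_of_lt j.isLt) hge
    rw [hDle, Nat.mod_self] at hval
    rw [hval, pow_zero]
    calc (1:ℂ) = omg D ^ D := omg_pow_D.symm
    _ = omg D ^ ((j:ℕ)+1) := by rw [hDle]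
    _ = omg D * omg D ^ (j:ℕ) := by rw [pow_succ, mul_comm]

lemma Zmat_diag : Zmat D = Matrix.diagonal fun i : Fin D => (omg D) ^ (i : ℕ) := by
  ext i j
  by_cases h : i = j <;> simp [Zmat, Matrix.diagonal, h]

lemma X_mul (M : Matrix (Fin D) (Fin D) ℂ) :
    Xmat D * M = Matrix.of fun i j : Fin D => M (fnn (((i : ℕ) : ZMod D) - 1)) j := by
  ext i j
  rw [Matrix.mul_apply]
  have : ∀ k : Fin D, Xmat D i k * M k j
      = if k = fnn (((i : ℕ) : ZMod D) - 1) then M k j else 0 := by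
    intro k
    have hcond : (((i : ℕ) : ZMod D) = ((k : ℕ) : ZMod D) + 1)
        ↔ k = fnn (((i : ℕ) : ZMod D) - 1) := by
      rw [← cast_eq_iff, eq_sub_iff_add_eq, eq_comm]
    simp only [Xmat, Matrix.of_apply, hcond]
    split <;> simp
  simp only [this, Finset.sum_ite_eq', Finset.mem_univ, if_true]
  rfl

lemma mul_X (M : Matrix (Fin D) (Fin D) ℂ) :
    M * Xmat D = Matrix.of fun i j : Fin D => M i (fnn (((j : ℕ) : ZMod D) + 1)) := by
  ext i j
  rw [Matrix.mul_apply]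
  have : ∀ k : Fin D, M i k * Xmat D k j
      = if k = fnn (((j : ℕ) : ZMod D) + 1) then M i k else 0 := by
    intro k
    simp only [Xmat, Matrix.of_apply, cast_eq_iff]
    split <;> simp
  simp only [this, Finset.sum_ite_eq', Finset.mem_univ, if_true]
  rfl

lemma X_mul_Y : Xmat D * Ymat D = 1 := by
  rw [X_mul]
  ext i j
  have : (((j : ℕ) : ZMod D) = ((fnn (((i : ℕ) : ZMod D) - 1) : Fin D) : ℕ) + 1)
      ↔ j = i := by
    rw [cast_fnn, sub_add_cancel, cast_eq_iff]
    constructor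
    · rintro rfl; ext; simp [fnn, ZMod.val_cast_of_lt i.isLt]
    · rintro rfl; ext; simp [fnn, ZMod.val_cast_of_lt j.isLt]
  simp only [Ymat, Matrix.of_apply, this, Matrix.one_apply, eq_comm]

lemma Y_mul_X : Ymat D * Xmat D = 1 := by
  rw [mul_X]
  ext i j
  have : (((fnn (((j : ℕ) : ZMod D) + 1) : Fin D) : ℕ) : ZMod D) = ((i : ℕ) : ZMod D) + 1
      ↔ i = j := by
    rw [cast_fnn]
    constructor
    · intro h
      have h2 : ((i : ℕ) : ZMod D) = ((j : ℕ) : ZMod D) := add_right_cancel h.symm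
      rw [cast_eq_iff] at h2
      rw [h2]; ext; simp [fnn, ZMod.val_cast_of_lt j.isLt]
    · rintro rfl; rfl
  simp only [Ymat, Matrix.of_apply, this, Matrix.one_apply]

lemma Z_mul_W : Zmat D * Wmat D = 1 := by
  rw [Zmat_diag, Wmat, Matrix.diagonal_mul_diagonal]
  ext i j
  rcases eq_or_ne i j with rfl | h
  · simp [Matrix.diagonal_apply_eq, Matrix.one_apply_eq,
      mul_inv_cancel₀ (pow_ne_zero _ (omg_ne_zero (D := D)))]
  · simp [Matrix.diagonal_apply_ne _ h, Matrix.one_apply_ne h]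

lemma W_mul_Z : Wmat D * Zmat D = 1 := by
  rw [Zmat_diag, Wmat, Matrix.diagonal_mul_diagonal]
  ext i j
  rcases eq_or_ne i j with rfl | h
  · simp [Matrix.diagonal_apply_eq, Matrix.one_apply_eq,
      inv_mul_cancel₀ (pow_ne_zero _ (omg_ne_zero (D := D)))]
  · simp [Matrix.diagonal_apply_ne _ h, Matrix.one_apply_ne h]

lemma Z_X : Zmat D * Xmat D = omg D • (Xmat D * Zmat D) := by
  rw [Zmat_diag]
  ext i j
  rw [Matrix.smul_apply, Matrix.diagonal_mul, Matrix.mul_diagonal]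
  by_cases h : ((i : ℕ) : ZMod D) = ((j : ℕ) : ZMod D) + 1
  · simp only [Xmat, Matrix.of_apply, if_pos h, mul_one, one_mul, smul_eq_mul]
    exact shift_pow h
  · simp [Xmat, Matrix.of_apply, if_neg h]

lemma W_X : Wmat D * Xmat D = (omg D)⁻¹ • (Xmat D * Wmat D) := by
  rw [Wmat]
  ext i j
  rw [Matrix.smul_apply, Matrix.diagonal_mul, Matrix.mul_diagonal]
  by_cases h : ((i : ℕ) : ZMod D) = ((j : ℕ) : ZMod D) + 1
  · simp only [Xmat, Matrix.of_apply, if_pos h, mul_one, one_mul, smul_eq_mul]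
    rw [shift_pow h, mul_inv]
  · simp [Xmat, Matrix.of_apply, if_neg h]

lemma Z_Y : Zmat D * Ymat D = (omg D)⁻¹ • (Ymat D * Zmat D) := by
  rw [Zmat_diag]
  ext i j
  rw [Matrix.smul_apply, Matrix.diagonal_mul, Matrix.mul_diagonal]
  by_cases h : ((j : ℕ) : ZMod D) = ((i : ℕ) : ZMod D) + 1
  · simp only [Ymat, Matrix.of_apply, if_pos h, mul_one, one_mul, smul_eq_mul]
    rw [shift_pow h, ← mul_assoc, inv_mul_cancel₀ (omg_ne_zero (D := D)), one_mul]
  · simp [Ymat, Matrix.of_apply, if_neg h]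

lemma W_Y : Wmat D * Ymat D = omg D • (Ymat D * Wmat D) := by
  rw [Wmat]
  ext i j
  rw [Matrix.smul_apply, Matrix.diagonal_mul, Matrix.mul_diagonal]
  by_cases h : ((j : ℕ) : ZMod D) = ((i : ℕ) : ZMod D) + 1
  · simp only [Ymat, Matrix.of_apply, if_pos h, mul_one, one_mul, smul_eq_mul]
    rw [shift_pow h, mul_inv, ← mul_assoc, mul_inv_cancel₀ (omg_ne_zero (D := D)), one_mul]
  · simp [Ymat, Matrix.of_apply, if_neg h]

lemma Xneg2 : Xmat D ^ (-2 : ℤ) = Ymat D * Ymat D := by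
  have h1 : (Xmat D * Xmat D) * (Ymat D * Ymat D) = 1 := by
    calc (Xmat D * Xmat D) * (Ymat D * Ymat D)
        = Xmat D * (Xmat D * Ymat D) * Ymat D := by noncomm_ring
      _ = 1 := by rw [X_mul_Y, mul_one, X_mul_Y]
  calc Xmat D ^ (-2 : ℤ) = (Xmat D ^ 2)⁻¹ := zpow_negSucc _ 1
    _ = (Xmat D * Xmat D)⁻¹ := by rw [sq]
    _ = Ymat D * Ymat D := Matrix.inv_eq_right_inv h1

lemma Zneg1 : Zmat D ^ (-1 : ℤ) = Wmat D := by
  calc Zmat D ^ (-1 : ℤ) = (Zmat D ^ 1)⁻¹ := zpow_negSucc _ 0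
    _ = (Zmat D)⁻¹ := by rw [pow_one]
    _ = Wmat D := Matrix.inv_eq_right_inv Z_mul_W

lemma hAS : (Ymat D * Ymat D) * (Xmat D * Zmat D) = Ymat D * Zmat D := by
  calc (Ymat D * Ymat D) * (Xmat D * Zmat D) = Ymat D * (Ymat D * Xmat D) * Zmat D := by
        noncomm_ring
    _ = Ymat D * Zmat D := by rw [Y_mul_X, mul_one]

lemma hAT : (Ymat D * Ymat D) * (Xmat D * Wmat D) = Ymat D * Wmat D := by
  calc (Ymat D * Ymat D) * (Xmat D * Wmat D) = Ymat D * (Ymat D * Xmat D) * Wmat D := by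
        noncomm_ring
    _ = Ymat D * Wmat D := by rw [Y_mul_X, mul_one]

lemma hSA : (Xmat D * Zmat D) * (Ymat D * Ymat D)
    = ((omg D)⁻¹ * (omg D)⁻¹) • (Ymat D * Zmat D) := by
  calc (Xmat D * Zmat D) * (Ymat D * Ymat D) = Xmat D * (Zmat D * Ymat D) * Ymat D := by
        noncomm_ring
    _ = (omg D)⁻¹ • (Xmat D * (Ymat D * Zmat D) * Ymat D) := by
        rw [Z_Y, Matrix.mul_smul, Matrix.smul_mul]
    _ = (omg D)⁻¹ • ((Xmat D * Ymat D) * (Zmat D * Ymat D)) := by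
        congr 1; noncomm_ring
    _ = (omg D)⁻¹ • (Zmat D * Ymat D) := by rw [X_mul_Y, one_mul]
    _ = ((omg D)⁻¹ * (omg D)⁻¹) • (Ymat D * Zmat D) := by rw [Z_Y, smul_smul]

lemma hTA : (Xmat D * Wmat D) * (Ymat D * Ymat D)
    = (omg D * omg D) • (Ymat D * Wmat D) := by
  calc (Xmat D * Wmat D) * (Ymat D * Ymat D) = Xmat D * (Wmat D * Ymat D) * Ymat D := by
        noncomm_ring
    _ = omg D • (Xmat D * (Ymat D * Wmat D) * Ymat D) := by
        rw [W_Y, Matrix.mul_smul, Matrix.smul_mul]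
    _ = omg D • ((Xmat D * Ymat D) * (Wmat D * Ymat D)) := by
        congr 1; noncomm_ring
    _ = omg D • (Wmat D * Ymat D) := by rw [X_mul_Y, one_mul]
    _ = (omg D * omg D) • (Ymat D * Wmat D) := by rw [W_Y, smul_smul]

lemma hST : (Xmat D * Zmat D) * (Xmat D * Wmat D)
    = omg D • ((Xmat D * Xmat D) * (Zmat D * Wmat D)) := by
  calc (Xmat D * Zmat D) * (Xmat D * Wmat D) = Xmat D * (Zmat D * Xmat D) * Wmat D := by
        noncomm_ring
    _ = omg D • (Xmat D * (Xmat D * Zmat D) * Wmat D) := by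
        rw [Z_X, Matrix.mul_smul, Matrix.smul_mul]
    _ = omg D • ((Xmat D * Xmat D) * (Zmat D * Wmat D)) := by congr 1; noncomm_ring

lemma hTS : (Xmat D * Wmat D) * (Xmat D * Zmat D)
    = (omg D)⁻¹ • ((Xmat D * Xmat D) * (Wmat D * Zmat D)) := by
  calc (Xmat D * Wmat D) * (Xmat D * Zmat D) = Xmat D * (Wmat D * Xmat D) * Zmat D := by
        noncomm_ring
    _ = (omg D)⁻¹ • (Xmat D * (Xmat D * Wmat D) * Zmat D) := by
        rw [W_X, Matrix.mul_smul, Matrix.smul_mul]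
    _ = (omg D)⁻¹ • ((Xmat D * Xmat D) * (Wmat D * Zmat D)) := by congr 1; noncomm_ring

lemma hST' : (Xmat D * Zmat D) * (Xmat D * Wmat D) = omg D • (Xmat D * Xmat D) := by
  rw [hST, Z_mul_W, mul_one]

lemma hTS' : (Xmat D * Wmat D) * (Xmat D * Zmat D) = (omg D)⁻¹ • (Xmat D * Xmat D) := by
  rw [hTS, W_mul_Z, mul_one]

lemma nonempty_fin : Nonempty (Fin D) := ⟨⟨0, Nat.pos_of_ne_zero (NeZero.ne D)⟩⟩

lemma ne_zero_of_right_inv {M N : Matrix (Fin D) (Fin D) ℂ} (h : M * N = 1) : M ≠ 0 := by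
  haveI := nonempty_fin (D := D)
  intro h0
  rw [h0, Matrix.zero_mul] at h
  exact one_ne_zero h.symm

lemma YZ_ne : Ymat D * Zmat D ≠ 0 := by
  refine ne_zero_of_right_inv (N := Wmat D * Xmat D) ?_
  calc (Ymat D * Zmat D) * (Wmat D * Xmat D) = Ymat D * (Zmat D * Wmat D) * Xmat D := by
        noncomm_ring
    _ = 1 := by rw [Z_mul_W, mul_one, Y_mul_X]

lemma YW_ne : Ymat D * Wmat D ≠ 0 := by
  refine ne_zero_of_right_inv (N := Zmat D * Xmat D) ?_
  calc (Ymat D * Wmat D) * (Zmat D * Xmat D) = Ymat D * (Wmat D * Zmat D) * Xmat D := by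
        noncomm_ring
    _ = 1 := by rw [W_mul_Z, mul_one, Y_mul_X]

lemma XX_ne : Xmat D * Xmat D ≠ 0 := by
  refine ne_zero_of_right_inv (N := Ymat D * Ymat D) ?_
  calc (Xmat D * Xmat D) * (Ymat D * Ymat D) = Xmat D * (Xmat D * Ymat D) * Ymat D := by
        noncomm_ring
    _ = 1 := by rw [X_mul_Y, mul_one, X_mul_Y]

lemma factor1 : Xmat D ^ (-2 : ℤ) * (Xmat D * Zmat D) * (Xmat D * Zmat D ^ (-1 : ℤ))
    = omg D • (1 : Matrix (Fin D) (Fin D) ℂ) := by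
  rw [Xneg2, Zneg1]
  calc (Ymat D * Ymat D) * (Xmat D * Zmat D) * (Xmat D * Wmat D)
      = (Ymat D * Zmat D) * (Xmat D * Wmat D) := by rw [hAS]
    _ = Ymat D * (Zmat D * Xmat D) * Wmat D := by noncomm_ring
    _ = omg D • (Ymat D * (Xmat D * Zmat D) * Wmat D) := by
        rw [Z_X, Matrix.mul_smul, Matrix.smul_mul]
    _ = omg D • ((Ymat D * Xmat D) * (Zmat D * Wmat D)) := by congr 1; noncomm_ring
    _ = omg D • 1 := by rw [Y_mul_X, Z_mul_W, one_mul]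

lemma factor2 : Xmat D ^ (-2 : ℤ) * (Xmat D * Zmat D ^ (-1 : ℤ)) * (Xmat D * Zmat D)
    = (omg D)⁻¹ • (1 : Matrix (Fin D) (Fin D) ℂ) := by
  rw [Xneg2, Zneg1]
  calc (Ymat D * Ymat D) * (Xmat D * Wmat D) * (Xmat D * Zmat D)
      = (Ymat D * Wmat D) * (Xmat D * Zmat D) := by rw [hAT]
    _ = Ymat D * (Wmat D * Xmat D) * Zmat D := by noncomm_ring
    _ = (omg D)⁻¹ • (Ymat D * (Xmat D * Wmat D) * Zmat D) := by
        rw [W_X, Matrix.mul_smul, Matrix.smul_mul]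
    _ = (omg D)⁻¹ • ((Ymat D * Xmat D) * (Wmat D * Zmat D)) := by congr 1; noncomm_ring
    _ = (omg D)⁻¹ • 1 := by rw [Y_mul_X, W_mul_Z, one_mul]

end Aux

/-- The explicit (●,■) qudit Floquet code checks satisfy the three code
conditions. -/
theorem circle_square_code_conditions (D : ℕ) (hD : Nat.Prime D) (hD3 : 3 ≤ D)
    (G : Matrix (Fin D × Fin D) (Fin D × Fin D) ℂ)
    (hG : G = (Xmat D ^ (-2 : ℤ)) ⊗ₖ (Xmat D ^ (-2 : ℤ)))
    (R : Matrix (Fin D × Fin D) (Fin D × Fin D) ℂ)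
    (hR : R = (Xmat D * Zmat D) ⊗ₖ (Xmat D * Zmat D ^ (-1 : ℤ)))
    (B : Matrix (Fin D × Fin D) (Fin D × Fin D) ℂ)
    (hB : B = (Xmat D * Zmat D ^ (-1 : ℤ)) ⊗ₖ (Xmat D * Zmat D)) :
    (Commute G R ∧ Commute G B ∧ Commute R B) ∧
    (¬ Commute (Xmat D ^ (-2 : ℤ)) (Xmat D * Zmat D) ∧
     ¬ Commute (Xmat D ^ (-2 : ℤ)) (Xmat D * Zmat D ^ (-1 : ℤ)) ∧
     ¬ Commute (Xmat D * Zmat D) (Xmat D * Zmat D ^ (-1 : ℤ))) ∧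
    (Xmat D ^ (-2 : ℤ) * (Xmat D * Zmat D) * (Xmat D * Zmat D ^ (-1 : ℤ)))
      ⊗ₖ (Xmat D ^ (-2 : ℤ) * (Xmat D * Zmat D ^ (-1 : ℤ)) * (Xmat D * Zmat D)) = 1 := by
  haveI : NeZero D := ⟨by omega⟩
  have hc0 : omg D ≠ 0 := omg_ne_zero
  have hc2 : omg D * omg D ≠ 1 := by
    have := (Complex.isPrimitiveRoot_exp D (NeZero.ne D)).pow_ne_one_of_pos_of_lt
      (l := 2) two_ne_zero (by omega)
    rwa [pow_two] at this
  have hc2' : (omg D)⁻¹ * (omg D)⁻¹ ≠ 1 := by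
    intro h
    rw [← mul_inv, inv_eq_one] at h
    exact hc2 h
  have hcc : ((omg D)⁻¹ * (omg D)⁻¹) * (omg D * omg D) = 1 := by
    field_simp
  refine ⟨⟨?_, ?_, ?_⟩, ⟨?_, ?_, ?_⟩, ?_⟩
  · -- Commute G R
    show G * R = R * G
    rw [hG, hR, Xneg2, Zneg1, ← Matrix.mul_kronecker_mul, ← Matrix.mul_kronecker_mul,
      hAS, hAT, hSA, hTA, Matrix.smul_kronecker, Matrix.kronecker_smul, smul_smul, hcc, one_smul]
  · -- Commute G B
    show G * B = B * G
    rw [hG, hB, Xneg2, Zneg1, ← Matrix.mul_kronecker_mul, ← Matrix.mul_kronecker_mul,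
      hAT, hAS, hTA, hSA, Matrix.smul_kronecker, Matrix.kronecker_smul, smul_smul,
      mul_comm (omg D * omg D) ((omg D)⁻¹ * (omg D)⁻¹), hcc, one_smul]
  · -- Commute R B
    show R * B = B * R
    rw [hR, hB, Zneg1, ← Matrix.mul_kronecker_mul, ← Matrix.mul_kronecker_mul,
      hST', hTS', Matrix.smul_kronecker, Matrix.kronecker_smul, smul_smul,
      Matrix.smul_kronecker, Matrix.kronecker_smul, smul_smul,
      mul_inv_cancel₀ hc0, inv_mul_cancel₀ hc0]
  · -- ¬ Commute A S
    intro h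
    have h' : (Xmat D ^ (-2 : ℤ)) * (Xmat D * Zmat D)
        = (Xmat D * Zmat D) * (Xmat D ^ (-2 : ℤ)) := h
    rw [Xneg2, hAS, hSA] at h'
    have h2 : (((omg D)⁻¹ * (omg D)⁻¹) - 1) • (Ymat D * Zmat D) = 0 := by
      rw [sub_smul, one_smul, ← h', sub_self]
    rcases smul_eq_zero.mp h2 with h3 | h3
    · exact hc2' (by linear_combination h3)
    · exact YZ_ne h3
  · -- ¬ Commute A T
    intro h
    have h' : (Xmat D ^ (-2 : ℤ)) * (Xmat D * Zmat D ^ (-1 : ℤ))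
        = (Xmat D * Zmat D ^ (-1 : ℤ)) * (Xmat D ^ (-2 : ℤ)) := h
    rw [Xneg2, Zneg1, hAT, hTA] at h'
    have h2 : ((omg D * omg D) - 1) • (Ymat D * Wmat D) = 0 := by
      rw [sub_smul, one_smul, ← h', sub_self]
    rcases smul_eq_zero.mp h2 with h3 | h3
    · exact hc2 (by linear_combination h3)
    · exact YW_ne h3
  · -- ¬ Commute S T
    intro h
    have h' : (Xmat D * Zmat D) * (Xmat D * Zmat D ^ (-1 : ℤ))
        = (Xmat D * Zmat D ^ (-1 : ℤ)) * (Xmat D * Zmat D) := h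
    rw [Zneg1, hST', hTS'] at h'
    have h2 : (omg D - (omg D)⁻¹) • (Xmat D * Xmat D) = 0 := by
      rw [sub_smul, h', sub_self]
    rcases smul_eq_zero.mp h2 with h3 | h3
    · have h4 : omg D = (omg D)⁻¹ := by linear_combination h3
      apply hc2
      calc omg D * omg D = omg D * (omg D)⁻¹ := by rw [← h4]
        _ = 1 := mul_inv_cancel₀ hc0
    · exact XX_ne h3
  · -- product is identity
    rw [factor1, factor2, Matrix.smul_kronecker, Matrix.kronecker_smul, smul_smul,
      mul_inv_cancel₀ hc0, one_smul, Matrix.one_kronecker_one]
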